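/- Let q(m,n) := m² + mn + n² and let F : ℝ → ℝ be such that the family (m,n) ↦ (m²+n²)² · F(q(m,n)) is absolutely summable over ℤ²∖{(0,0)}. Then: (i) ∑_{(m,n)≠(0,0)} mn · F(q(m,n)) = −(1/2) ∑_{(m,n)≠(0,0)} n² · F(q(m,n)); (ii) ∑_{(m,n)≠(0,0)} m n³ · F(q(m,n)) = −(1/2) ∑_{(m,n)≠(0,0)} n⁴ · F(q(m,n)); (iii) ∑_{(m,n)≠(0,0)} m²n² · F(q(m,n)) = (1/2) ∑_{(m,n)≠(0,0)} n⁴ · F(q(m,n)). -/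

import Mathlib

open Real

noncomputable section

/-- The triangular quadratic form `q(m,n) = m² + mn + n²`, as a real number. -/
def qtri (p : ℤ × ℤ) : ℝ :=
  (p.1 : ℝ) ^ 2 + (p.1 : ℝ) * (p.2 : ℝ) + (p.2 : ℝ) ^ 2

namespace TriAux

abbrev Sub := {p : ℤ × ℤ // p ≠ 0}

def T : ℤ × ℤ ≃ ℤ × ℤ where
  toFun p := (-p.1 - p.2, p.2)
  invFun p := (-p.1 - p.2, p.2)
  left_inv p := by simp [Prod.ext_iff]
  right_inv p := by simp [Prod.ext_iff]

lemma T_ne (p : ℤ × ℤ) : p ≠ 0 ↔ T p ≠ 0 := by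
  simp [T, Prod.ext_iff]; omega

def eT : Sub ≃ Sub := T.subtypeEquiv T_ne

def eS : Sub ≃ Sub := (Equiv.prodComm ℤ ℤ).subtypeEquiv (fun p => by
  simp [Prod.ext_iff]; tauto)

lemma qtri_T (p : ℤ × ℤ) : qtri (T p) = qtri p := by
  simp only [qtri, T, Equiv.coe_fn_mk]
  push_cast
  ring

lemma qtri_S (p : ℤ × ℤ) : qtri (p.swap) = qtri p := by
  simp only [qtri, Prod.fst_swap, Prod.snd_swap]
  ring

lemma tsum_T (f : ℤ × ℤ → ℝ) :
    ∑' p : Sub, f (T p.1) = ∑' p : Sub, f p.1 :=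
  Equiv.tsum_eq eT (fun p : Sub => f p.1)

lemma tsum_S (f : ℤ × ℤ → ℝ) :
    ∑' p : Sub, f (p.1.swap) = ∑' p : Sub, f p.1 :=
  Equiv.tsum_eq eS (fun p : Sub => f p.1)

lemma one_le_sq (p : ℤ × ℤ) (hp : p ≠ 0) : (1 : ℝ) ≤ (p.1 : ℝ) ^ 2 + (p.2 : ℝ) ^ 2 := by
  have h : (1 : ℤ) ≤ p.1 ^ 2 + p.2 ^ 2 := by
    rcases eq_or_ne p.1 0 with h1 | h1
    · have h2 : p.2 ≠ 0 := by
        intro h2; exact hp (Prod.ext h1 h2)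
      have := Int.one_le_abs h2
      nlinarith [sq_nonneg p.1, sq_nonneg p.2, sq_abs p.2]
    · have := Int.one_le_abs h1
      nlinarith [sq_nonneg p.1, sq_nonneg p.2, sq_abs p.1]
  exact_mod_cast h

lemma bnds (a b : ℝ) (ha : 0 ≤ a) (hb : 0 ≤ b) (h1 : 1 ≤ a^2 + b^2) :
    a*b ≤ (a^2+b^2)^2 ∧ b^2 ≤ (a^2+b^2)^2 ∧ a*b^3 ≤ (a^2+b^2)^2 ∧ b^4 ≤ (a^2+b^2)^2 ∧
    a^2*b^2 ≤ (a^2+b^2)^2 ∧ a^3*b ≤ (a^2+b^2)^2 ∧ a^4 ≤ (a^2+b^2)^2 := by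
  have hab : a*b ≤ a^2 + b^2 := by nlinarith [sq_nonneg (a-b)]
  have hs : a^2+b^2 ≤ (a^2+b^2)^2 := by nlinarith [sq_nonneg (a^2+b^2-1)]
  refine ⟨by nlinarith, by nlinarith, ?_, by nlinarith, by nlinarith, ?_, by nlinarith⟩
  · nlinarith [sq_nonneg (a*b - b^2), sq_nonneg (a-b), mul_nonneg ha hb, sq_nonneg (a*b),
      mul_nonneg (mul_nonneg ha hb) (mul_nonneg hb hb)]
  · nlinarith [sq_nonneg (a*b - a^2), sq_nonneg (a-b), mul_nonneg ha hb, sq_nonneg (a*b),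
      mul_nonneg (mul_nonneg ha hb) (mul_nonneg ha ha)]

lemma summ (F : ℝ → ℝ)
    (hsum : Summable (fun p : Sub =>
      |((p.1.1 : ℝ) ^ 2 + (p.1.2 : ℝ) ^ 2) ^ 2 * F (qtri p.1)|))
    (f : ℤ × ℤ → ℝ)
    (hb : ∀ p : ℤ × ℤ, p ≠ 0 → |f p| ≤ ((p.1 : ℝ) ^ 2 + (p.2 : ℝ) ^ 2) ^ 2) :
    Summable (fun p : Sub => f p.1 * F (qtri p.1)) := by
  refine Summable.of_norm_bounded hsum ?_
  intro p
  rw [Real.norm_eq_abs, abs_mul, abs_mul]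
  have h0 : |((p.1.1 : ℝ) ^ 2 + (p.1.2 : ℝ) ^ 2) ^ 2|
      = ((p.1.1 : ℝ) ^ 2 + (p.1.2 : ℝ) ^ 2) ^ 2 := abs_of_nonneg (by positivity)
  rw [h0]
  exact mul_le_mul_of_nonneg_right (hb p.1 p.2) (abs_nonneg _)

end TriAux

open TriAux

/-- Lattice-sum identities for the triangular quadratic form `q(m,n) = m²+mn+n²`. -/
theorem triangular_lattice_sum_identities (F : ℝ → ℝ)
    (hsum : Summable (fun p : {p : ℤ × ℤ // p ≠ 0} =>
      |((p.1.1 : ℝ) ^ 2 + (p.1.2 : ℝ) ^ 2) ^ 2 * F (qtri p.1)|)) :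
    (∑' p : {p : ℤ × ℤ // p ≠ 0}, (p.1.1 : ℝ) * (p.1.2 : ℝ) * F (qtri p.1)) =
      -(1 / 2) * ∑' p : {p : ℤ × ℤ // p ≠ 0}, (p.1.2 : ℝ) ^ 2 * F (qtri p.1) ∧
    (∑' p : {p : ℤ × ℤ // p ≠ 0}, (p.1.1 : ℝ) * (p.1.2 : ℝ) ^ 3 * F (qtri p.1)) =
      -(1 / 2) * ∑' p : {p : ℤ × ℤ // p ≠ 0}, (p.1.2 : ℝ) ^ 4 * F (qtri p.1) ∧
    (∑' p : {p : ℤ × ℤ // p ≠ 0}, (p.1.1 : ℝ) ^ 2 * (p.1.2 : ℝ) ^ 2 * F (qtri p.1)) =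
      (1 / 2) * ∑' p : {p : ℤ × ℤ // p ≠ 0}, (p.1.2 : ℝ) ^ 4 * F (qtri p.1) := by
  have key : ∀ p : ℤ × ℤ, p ≠ 0 →
      |(p.1 : ℝ)| * |(p.2 : ℝ)| ≤ (((p.1:ℝ))^2+((p.2:ℝ))^2)^2 ∧
      ((p.2 : ℝ))^2 ≤ (((p.1:ℝ))^2+((p.2:ℝ))^2)^2 ∧
      |(p.1 : ℝ)| * |(p.2 : ℝ)|^3 ≤ (((p.1:ℝ))^2+((p.2:ℝ))^2)^2 ∧
      |(p.2 : ℝ)|^4 ≤ (((p.1:ℝ))^2+((p.2:ℝ))^2)^2 ∧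
      ((p.1 : ℝ))^2 * ((p.2 : ℝ))^2 ≤ (((p.1:ℝ))^2+((p.2:ℝ))^2)^2 ∧
      |(p.1 : ℝ)|^3 * |(p.2 : ℝ)| ≤ (((p.1:ℝ))^2+((p.2:ℝ))^2)^2 ∧
      |(p.1 : ℝ)|^4 ≤ (((p.1:ℝ))^2+((p.2:ℝ))^2)^2 := by
    intro p hp
    have h1 : (1:ℝ) ≤ |(p.1 : ℝ)|^2 + |(p.2 : ℝ)|^2 := by
      rw [sq_abs, sq_abs]; exact one_le_sq p hp
    have h := bnds |(p.1 : ℝ)| |(p.2 : ℝ)| (abs_nonneg _) (abs_nonneg _) h1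
    rw [sq_abs, sq_abs] at h
    exact h
  have hmn : Summable (fun p : Sub => (p.1.1 : ℝ) * (p.1.2 : ℝ) * F (qtri p.1)) := by
    refine summ F hsum (fun q => (q.1 : ℝ) * (q.2 : ℝ)) fun p hp => ?_
    rw [abs_mul]; exact (key p hp).1
  have hn2 : Summable (fun p : Sub => (p.1.2 : ℝ) ^ 2 * F (qtri p.1)) := by
    refine summ F hsum (fun q => (q.2 : ℝ) ^ 2) fun p hp => ?_
    rw [abs_pow, sq_abs]; exact (key p hp).2.1
  have hmn3 : Summable (fun p : Sub => (p.1.1 : ℝ) * (p.1.2 : ℝ) ^ 3 * F (qtri p.1)) := by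
    refine summ F hsum (fun q => (q.1 : ℝ) * (q.2 : ℝ) ^ 3) fun p hp => ?_
    rw [abs_mul, abs_pow]; exact (key p hp).2.2.1
  have hn4 : Summable (fun p : Sub => (p.1.2 : ℝ) ^ 4 * F (qtri p.1)) := by
    refine summ F hsum (fun q => (q.2 : ℝ) ^ 4) fun p hp => ?_
    rw [abs_pow]; exact (key p hp).2.2.2.1
  have hm2n2 : Summable (fun p : Sub => (p.1.1 : ℝ) ^ 2 * (p.1.2 : ℝ) ^ 2 * F (qtri p.1)) := by
    refine summ F hsum (fun q => (q.1 : ℝ) ^ 2 * (q.2 : ℝ) ^ 2) fun p hp => ?_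
    rw [abs_mul, abs_pow, abs_pow, sq_abs, sq_abs]; exact (key p hp).2.2.2.2.1
  have hm3n : Summable (fun p : Sub => (p.1.1 : ℝ) ^ 3 * (p.1.2 : ℝ) * F (qtri p.1)) := by
    refine summ F hsum (fun q => (q.1 : ℝ) ^ 3 * (q.2 : ℝ)) fun p hp => ?_
    rw [abs_mul, abs_pow]; exact (key p hp).2.2.2.2.2.1
  have hm4 : Summable (fun p : Sub => (p.1.1 : ℝ) ^ 4 * F (qtri p.1)) := by
    refine summ F hsum (fun q => (q.1 : ℝ) ^ 4) fun p hp => ?_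
    rw [abs_pow]; exact (key p hp).2.2.2.2.2.2
  have key1 : (∑' p : Sub, (p.1.1 : ℝ) * (p.1.2 : ℝ) * F (qtri p.1))
      = -(∑' p : Sub, (p.1.1 : ℝ) * (p.1.2 : ℝ) * F (qtri p.1))
        - (∑' p : Sub, (p.1.2 : ℝ) ^ 2 * F (qtri p.1)) := by
    conv_lhs => rw [← tsum_T (fun p => (p.1 : ℝ) * (p.2 : ℝ) * F (qtri p))]
    have heq : (fun p : Sub => ((T p.1).1 : ℝ) * ((T p.1).2 : ℝ) * F (qtri (T p.1)))
        = fun p : Sub => (-((p.1.1 : ℝ) * (p.1.2 : ℝ) * F (qtri p.1)))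
            + (-((p.1.2 : ℝ) ^ 2 * F (qtri p.1))) := by
      funext p
      rw [qtri_T]
      simp only [T, Equiv.coe_fn_mk]
      push_cast
      ring
    rw [heq, Summable.tsum_add hmn.neg hn2.neg, tsum_neg, tsum_neg]
    ring
  have key2 : (∑' p : Sub, (p.1.1 : ℝ) * (p.1.2 : ℝ) ^ 3 * F (qtri p.1))
      = -(∑' p : Sub, (p.1.1 : ℝ) * (p.1.2 : ℝ) ^ 3 * F (qtri p.1))
        - (∑' p : Sub, (p.1.2 : ℝ) ^ 4 * F (qtri p.1)) := by
    conv_lhs => rw [← tsum_T (fun p => (p.1 : ℝ) * (p.2 : ℝ) ^ 3 * F (qtri p))]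
    have heq : (fun p : Sub => ((T p.1).1 : ℝ) * ((T p.1).2 : ℝ) ^ 3 * F (qtri (T p.1)))
        = fun p : Sub => (-((p.1.1 : ℝ) * (p.1.2 : ℝ) ^ 3 * F (qtri p.1)))
            + (-((p.1.2 : ℝ) ^ 4 * F (qtri p.1))) := by
      funext p
      rw [qtri_T]
      simp only [T, Equiv.coe_fn_mk]
      push_cast
      ring
    rw [heq, Summable.tsum_add hmn3.neg hn4.neg, tsum_neg, tsum_neg]
    ring
  have keyHD : (∑' p : Sub, (p.1.1 : ℝ) ^ 4 * F (qtri p.1))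
      = ∑' p : Sub, (p.1.2 : ℝ) ^ 4 * F (qtri p.1) := by
    conv_rhs => rw [← tsum_S (fun p => (p.2 : ℝ) ^ 4 * F (qtri p))]
    congr 1
    funext p
    rw [qtri_S]
    simp
  have keyGC : (∑' p : Sub, (p.1.1 : ℝ) ^ 3 * (p.1.2 : ℝ) * F (qtri p.1))
      = ∑' p : Sub, (p.1.1 : ℝ) * (p.1.2 : ℝ) ^ 3 * F (qtri p.1) := by
    conv_rhs => rw [← tsum_S (fun p => (p.1 : ℝ) * (p.2 : ℝ) ^ 3 * F (qtri p))]
    congr 1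
    funext p
    rw [qtri_S]
    simp only [Prod.fst_swap, Prod.snd_swap]
    ring
  have key3 : (∑' p : Sub, (p.1.1 : ℝ) ^ 4 * F (qtri p.1))
      = (∑' p : Sub, (p.1.1 : ℝ) ^ 4 * F (qtri p.1))
        + (4 * (∑' p : Sub, (p.1.1 : ℝ) ^ 3 * (p.1.2 : ℝ) * F (qtri p.1))
        + (6 * (∑' p : Sub, (p.1.1 : ℝ) ^ 2 * (p.1.2 : ℝ) ^ 2 * F (qtri p.1))
        + (4 * (∑' p : Sub, (p.1.1 : ℝ) * (p.1.2 : ℝ) ^ 3 * F (qtri p.1))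
        + ∑' p : Sub, (p.1.2 : ℝ) ^ 4 * F (qtri p.1)))) := by
    conv_lhs => rw [← tsum_T (fun p => (p.1 : ℝ) ^ 4 * F (qtri p))]
    have heq : (fun p : Sub => ((T p.1).1 : ℝ) ^ 4 * F (qtri (T p.1)))
        = fun p : Sub => (p.1.1 : ℝ) ^ 4 * F (qtri p.1)
            + (4 * ((p.1.1 : ℝ) ^ 3 * (p.1.2 : ℝ) * F (qtri p.1))
            + (6 * ((p.1.1 : ℝ) ^ 2 * (p.1.2 : ℝ) ^ 2 * F (qtri p.1))
            + (4 * ((p.1.1 : ℝ) * (p.1.2 : ℝ) ^ 3 * F (qtri p.1))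
            + (p.1.2 : ℝ) ^ 4 * F (qtri p.1)))) := by
      funext p
      rw [qtri_T]
      simp only [T, Equiv.coe_fn_mk]
      push_cast
      ring
    rw [heq, Summable.tsum_add hm4 ((hm3n.mul_left 4).add ((hm2n2.mul_left 6).add
      ((hmn3.mul_left 4).add hn4))),
      Summable.tsum_add (hm3n.mul_left 4) ((hm2n2.mul_left 6).add ((hmn3.mul_left 4).add hn4)),
      Summable.tsum_add (hm2n2.mul_left 6) ((hmn3.mul_left 4).add hn4),
      Summable.tsum_add (hmn3.mul_left 4) hn4,
      tsum_mul_left, tsum_mul_left, tsum_mul_left]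
  refine ⟨by linarith, by linarith, by linarith⟩
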